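/- For a binary ensemble of pure states E = {(p, |φ₀⟩⟨φ₀|), (1-p, |φ₁⟩⟨φ₁|)}, the Holevo information χ(E) = S(p|φ₀⟩⟨φ₀| + (1-p)|φ₁⟩⟨φ₁|) satisfies χ(E) ≤ 2·√(p(1-p)·(1 - B²)), where B = |⟨φ₀|φ₁⟩| is the fidelity of the two pure states. -/

import Mathlib

open scoped InnerProductSpace


open Real Set
open scoped ComplexOrder

namespace HolevoAux


noncomputable def Hp : ℝ → ℝ := fun x =>
  Real.log 2 * (1 - 2*x) / Real.sqrt (x*(1-x)) - (Real.log (1-x) - Real.log x)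

noncomputable def Hf : ℝ → ℝ := fun x =>
  2 * Real.log 2 * Real.sqrt (x*(1-x)) - Real.binEntropy x

noncomputable def Hpp : ℝ → ℝ := fun x =>
  (Real.sqrt (x*(1-x)) - Real.log 2 / 2) / (x*(1-x) * Real.sqrt (x*(1-x)))

lemma hasDerivAt_q (x : ℝ) : HasDerivAt (fun y : ℝ => y*(1-y)) (1 - 2*x) x := by
  have := (hasDerivAt_id x).mul ((hasDerivAt_const x (1:ℝ)).sub (hasDerivAt_id x))
  simp only [id] at this
  convert this using 1
  rfl
  rfl
  rfl
  simp only [Pi.sub_apply, id_eq]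
  ring

lemma hasDerivAt_sqrtq {x : ℝ} (hx : x ∈ Ioo (0:ℝ) 1) :
    HasDerivAt (fun y : ℝ => Real.sqrt (y*(1-y))) ((1 - 2*x) / (2 * Real.sqrt (x*(1-x)))) x := by
  have hq : 0 < x * (1-x) := mul_pos hx.1 (by linarith [hx.2])
  have := (Real.hasDerivAt_sqrt hq.ne').comp x (hasDerivAt_q x)
  convert this using 1
  rfl
  rfl
  rfl
  simp [Function.comp]
  ring

lemma hasDerivAt_Hf {x : ℝ} (hx : x ∈ Ioo (0:ℝ) 1) : HasDerivAt Hf (Hp x) x := by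
  have hq : 0 < x * (1-x) := mul_pos hx.1 (by linarith [hx.2])
  have hs : 0 < Real.sqrt (x*(1-x)) := Real.sqrt_pos.2 hq
  have h1 := ((hasDerivAt_sqrtq hx).const_mul (2 * Real.log 2)).sub
    (Real.hasDerivAt_binEntropy hx.1.ne' (by linarith [hx.2] : x ≠ 1))
  convert h1 using 1
  rfl
  rfl
  rfl
  unfold Hp
  field_simp

lemma hasDerivAt_Hp {x : ℝ} (hx : x ∈ Ioo (0:ℝ) 1) : HasDerivAt Hp (Hpp x) x := by
  have hx1 : (0:ℝ) < 1 - x := by linarith [hx.2]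
  have hq : 0 < x * (1-x) := mul_pos hx.1 hx1
  have hs : 0 < Real.sqrt (x*(1-x)) := Real.sqrt_pos.2 hq
  have hnum : HasDerivAt (fun y : ℝ => Real.log 2 * (1 - 2*y)) (Real.log 2 * (-2)) x := by
    have := ((hasDerivAt_const x (1:ℝ)).sub ((hasDerivAt_id x).const_mul 2)).const_mul (Real.log 2)
    simp only [id] at this
    convert this using 1
    rfl
    rfl
    rfl
    ring
  have hdiv := hnum.div (hasDerivAt_sqrtq hx) hs.ne'
  have hlog1 : HasDerivAt (fun y : ℝ => Real.log (1-y)) (-(1/(1-x))) x := by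
    have := (Real.hasDerivAt_log hx1.ne').comp x
      ((hasDerivAt_const x (1:ℝ)).sub (hasDerivAt_id x))
    convert this using 1
    rfl
    rfl
    rfl
    ring
  have hlogx : HasDerivAt Real.log (1/x) x := by
    simpa using Real.hasDerivAt_log hx.1.ne'
  have htot := hdiv.sub (hlog1.sub hlogx)
  convert htot using 1
  rfl
  rfl
  rfl
  unfold Hpp
  set s := Real.sqrt (x*(1-x)) with hsdef
  have hs2 : s ^ 2 = x*(1-x) := Real.sq_sqrt hq.le
  have hx0 : x ≠ 0 := hx.1.ne'
  have hx1' : (1:ℝ) - x ≠ 0 := hx1.ne'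
  have h12 : (1-2*x)^2 = 1-4*s^2 := by rw [hs2]; ring
  have e2 : -(1/(1-x)) - 1/x = -(1/s^2) := by rw [hs2]; field_simp; ring
  rw [show Real.log 2 * (1-2*x) * ((1-2*x)/(2*s)) = Real.log 2 * ((1-2*x)^2)/(2*s) by ring,
    h12, e2, ← hs2]
  field_simp
  ring

lemma continuous_Hf : Continuous Hf := by
  unfold Hf
  have : Continuous fun x : ℝ => Real.sqrt (x*(1-x)) :=
    Real.continuous_sqrt.comp (by continuity)
  exact ((continuous_const.mul this)).sub Real.binEntropy_continuous

lemma Hf_symm (x : ℝ) : Hf (1-x) = Hf x := by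
  unfold Hf
  rw [Real.binEntropy_one_sub, show (1-x)*(1-(1-x)) = x*(1-x) by ring]

lemma Hf_half : Hf (1/2) = 0 := by
  unfold Hf
  rw [show (1/2 : ℝ)*(1-1/2) = (1/2)^2 by norm_num, Real.sqrt_sq (by norm_num : (0:ℝ) ≤ 1/2),
    show (1/2 : ℝ) = 2⁻¹ by norm_num, Real.binEntropy_two_inv]
  ring

lemma Hp_half : Hp (1/2) = 0 := by
  unfold Hp
  norm_num

lemma Hf_nonneg_half : ∀ x ∈ Icc (0:ℝ) (1/2), 0 ≤ Hf x := by
  have hL0 : 0 < Real.log 2 := Real.log_pos one_lt_two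
  have hL1 : Real.log 2 < 1 := by
    have := Real.log_two_lt_d9
    linarith
  set L := Real.log 2 with hLdef
  have h1L : 0 < 1 - L^2 := by nlinarith
  set c := Real.sqrt (1 - L^2) with hcdef
  have hc2 : c^2 = 1 - L^2 := Real.sq_sqrt h1L.le
  have hc0 : 0 < c := Real.sqrt_pos.2 h1L
  have hc1 : c < 1 := by nlinarith [hc2, hc0]
  set x₁ := (1-c)/2 with hx₁def
  have hx₁0 : 0 < x₁ := by rw [hx₁def]; linarith
  have hx₁h : x₁ < 1/2 := by rw [hx₁def]; linarith
  -- membership helper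
  have hmem : ∀ x ∈ Icc x₁ (1/2), x ∈ Ioo (0:ℝ) 1 := fun x hx =>
    ⟨lt_of_lt_of_le hx₁0 hx.1, lt_of_le_of_lt hx.2 (by norm_num)⟩
  -- Hpp nonneg on Ioo x₁ (1/2)
  have hppnn : ∀ x ∈ Ioo x₁ (1/2), 0 ≤ Hpp x := by
    intro x hx
    have hx01 : x ∈ Ioo (0:ℝ) 1 := hmem x ⟨hx.1.le, hx.2.le⟩
    have hq : 0 < x * (1-x) := mul_pos hx01.1 (by linarith [hx01.2])
    have hqL : L^2/4 ≤ x*(1-x) := by nlinarith [hc2, hx.1, hx.2]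
    have hsL : L/2 ≤ Real.sqrt (x*(1-x)) := by
      rw [show L/2 = Real.sqrt ((L/2)^2) by rw [Real.sqrt_sq (by positivity)]]
      exact Real.sqrt_le_sqrt (by nlinarith)
    have hs : 0 < Real.sqrt (x*(1-x)) := Real.sqrt_pos.2 hq
    exact div_nonneg (by linarith) (by positivity)
  -- Hp monotone on Icc x₁ (1/2)
  have monoHp : MonotoneOn Hp (Icc x₁ (1/2)) := by
    apply monotoneOn_of_deriv_nonneg (convex_Icc _ _)
    · exact fun x hx => ((hasDerivAt_Hp (hmem x hx)).continuousAt).continuousWithinAt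
    · intro x hx
      rw [interior_Icc] at hx
      exact (hasDerivAt_Hp (hmem x ⟨hx.1.le, hx.2.le⟩)).differentiableAt.differentiableWithinAt
    · intro x hx
      rw [interior_Icc] at hx
      rw [(hasDerivAt_Hp (hmem x ⟨hx.1.le, hx.2.le⟩)).deriv]
      exact hppnn x hx
  have hp_le0 : ∀ x ∈ Icc x₁ (1/2), Hp x ≤ 0 := by
    intro x hx
    have := monoHp hx (right_mem_Icc.2 hx₁h.le) hx.2
    rw [Hp_half] at this
    exact this
  -- Hf antitone on Icc x₁ (1/2)
  have antiHf : AntitoneOn Hf (Icc x₁ (1/2)) := by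
    apply antitoneOn_of_deriv_nonpos (convex_Icc _ _) (continuous_Hf.continuousOn)
    · intro x hx
      rw [interior_Icc] at hx
      exact (hasDerivAt_Hf (hmem x ⟨hx.1.le, hx.2.le⟩)).differentiableAt.differentiableWithinAt
    · intro x hx
      rw [interior_Icc] at hx
      rw [(hasDerivAt_Hf (hmem x ⟨hx.1.le, hx.2.le⟩)).deriv]
      exact hp_le0 x ⟨hx.1.le, hx.2.le⟩
  have step5 : ∀ x ∈ Icc x₁ (1/2), 0 ≤ Hf x := by
    intro x hx
    have := antiHf hx (right_mem_Icc.2 hx₁h.le) hx.2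
    rw [Hf_half] at this
    exact this
  -- Hp antitone on Ioo 0 x₁
  have antiHp : AntitoneOn Hp (Ioo 0 x₁) := by
    apply antitoneOn_of_deriv_nonpos (convex_Ioo _ _)
    · intro x hx
      have hx01 : x ∈ Ioo (0:ℝ) 1 := ⟨hx.1, by linarith [hx.2]⟩
      exact ((hasDerivAt_Hp hx01).continuousAt).continuousWithinAt
    · intro x hx
      rw [interior_Ioo] at hx
      have hx01 : x ∈ Ioo (0:ℝ) 1 := ⟨hx.1, by linarith [hx.2]⟩
      exact (hasDerivAt_Hp hx01).differentiableAt.differentiableWithinAt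
    · intro x hx
      rw [interior_Ioo] at hx
      have hx01 : x ∈ Ioo (0:ℝ) 1 := ⟨hx.1, by linarith [hx.2]⟩
      rw [(hasDerivAt_Hp hx01).deriv]
      have hq : 0 < x * (1-x) := mul_pos hx01.1 (by linarith [hx01.2])
      have hqL : x*(1-x) ≤ L^2/4 := by nlinarith [hc2, hx.1, hx.2]
      have hsL : Real.sqrt (x*(1-x)) ≤ L/2 := by
        rw [show L/2 = Real.sqrt ((L/2)^2) by rw [Real.sqrt_sq (by positivity)]]
        exact Real.sqrt_le_sqrt (by nlinarith)
      have hs : 0 < Real.sqrt (x*(1-x)) := Real.sqrt_pos.2 hq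
      exact div_nonpos_of_nonpos_of_nonneg (by linarith) (by positivity)
  -- Hf concave on Icc 0 x₁
  have concHf : ConcaveOn ℝ (Icc 0 x₁) Hf := by
    apply AntitoneOn.concaveOn_of_deriv (convex_Icc _ _) (continuous_Hf.continuousOn)
    · intro x hx
      rw [interior_Icc] at hx
      have hx01 : x ∈ Ioo (0:ℝ) 1 := ⟨hx.1, by linarith [hx.2]⟩
      exact (hasDerivAt_Hf hx01).differentiableAt.differentiableWithinAt
    · intro a ha b hb hab
      rw [interior_Icc] at ha hb
      have ha01 : a ∈ Ioo (0:ℝ) 1 := ⟨ha.1, by linarith [ha.2]⟩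
      have hb01 : b ∈ Ioo (0:ℝ) 1 := ⟨hb.1, by linarith [hb.2]⟩
      rw [(hasDerivAt_Hf ha01).deriv, (hasDerivAt_Hf hb01).deriv]
      exact antiHp ha hb hab
  have Hf0 : Hf 0 = 0 := by
    unfold Hf
    simp
  -- conclude
  intro x hx
  by_cases hcase : x₁ ≤ x
  · exact step5 x ⟨hcase, hx.2⟩
  · push_neg at hcase
    rcases eq_or_lt_of_le hx.1 with h0 | h0
    · rw [← h0, Hf0]
    · have ha : (0:ℝ) ≤ (x₁ - x)/x₁ := div_nonneg (by linarith) hx₁0.le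
      have hb : (0:ℝ) ≤ x/x₁ := div_nonneg h0.le hx₁0.le
      have hab : (x₁ - x)/x₁ + x/x₁ = 1 := by field_simp; ring
      have := concHf.2 (left_mem_Icc.2 hx₁0.le) (right_mem_Icc.2 hx₁0.le) ha hb hab
      simp only [smul_eq_mul, mul_zero, zero_add] at this
      rw [show x/x₁ * x₁ = x by field_simp, Hf0, mul_zero, zero_add] at this
      have hfx₁ : 0 ≤ Hf x₁ := step5 x₁ ⟨le_refl _, hx₁h.le⟩
      exact le_trans (mul_nonneg hb hfx₁) this

lemma binEntropy_le_two_log_sqrt : ∀ x ∈ Icc (0:ℝ) 1,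
    Real.binEntropy x ≤ 2 * Real.log 2 * Real.sqrt (x*(1-x)) := by
  intro x hx
  have key : 0 ≤ Hf x := by
    by_cases hc : x ≤ 1/2
    · exact Hf_nonneg_half x ⟨hx.1, hc⟩
    · have := Hf_nonneg_half (1-x) ⟨by linarith [hx.2], by linarith⟩
      rwa [Hf_symm] at this
  unfold Hf at key
  linarith


section matrixfacts

variable {d : ℕ}

lemma trace_outer_mul_outer (u v : EuclideanSpace ℂ (Fin d)) :
    Matrix.trace ((Matrix.of (fun i j => u i * (starRingEnd ℂ) (u j))) *
      (Matrix.of (fun i j => v i * (starRingEnd ℂ) (v j))))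
      = ⟪u, v⟫_ℂ * ⟪v, u⟫_ℂ := by
  simp only [Matrix.trace, Matrix.diag_apply, Matrix.mul_apply, Matrix.of_apply,
    PiLp.inner_apply, RCLike.inner_apply, starRingEnd_apply]
  rw [Finset.sum_mul_sum, Finset.sum_comm]
  refine Finset.sum_congr rfl fun i _ => Finset.sum_congr rfl fun j _ => ?_
  ring

lemma trace_outer (u : EuclideanSpace ℂ (Fin d)) :
    Matrix.trace (Matrix.of (fun i j => u i * (starRingEnd ℂ) (u j))) = ⟪u, u⟫_ℂ := by
  simp only [Matrix.trace, Matrix.diag_apply, Matrix.of_apply, PiLp.inner_apply,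
    RCLike.inner_apply, starRingEnd_apply]

lemma trace_eq_sum_eigs {ρ : Matrix (Fin d) (Fin d) ℂ} (hherm : ρ.IsHermitian) :
    Matrix.trace ρ = ∑ i, (hherm.eigenvalues i : ℂ) := by
  conv_lhs => rw [hherm.spectral_theorem]
  show Matrix.trace ((Matrix.IsHermitian.eigenvectorUnitary hherm : Matrix (Fin d) (Fin d) ℂ) * Matrix.diagonal (RCLike.ofReal ∘ hherm.eigenvalues) * star (Matrix.IsHermitian.eigenvectorUnitary hherm : Matrix (Fin d) (Fin d) ℂ)) = _
  rw [Matrix.trace_mul_cycle,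
    Matrix.mem_unitaryGroup_iff'.mp (Matrix.IsHermitian.eigenvectorUnitary hherm).2, one_mul,
    Matrix.trace_diagonal]
  rfl

lemma trace_sq_eq_sum_sq_eigs {ρ : Matrix (Fin d) (Fin d) ℂ} (hherm : ρ.IsHermitian) :
    Matrix.trace (ρ * ρ) = ∑ i, (hherm.eigenvalues i : ℂ)^2 := by
  set U := (Matrix.IsHermitian.eigenvectorUnitary hherm : Matrix (Fin d) (Fin d) ℂ)
  set D := Matrix.diagonal (RCLike.ofReal ∘ hherm.eigenvalues : Fin d → ℂ)
  have hU : star U * U = 1 := Matrix.mem_unitaryGroup_iff'.mp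
    (Matrix.IsHermitian.eigenvectorUnitary hherm).2
  have h1 : ρ * ρ = U * (D * D) * star U := by
    conv_lhs => rw [hherm.spectral_theorem]
    show (U * D * star U) * (U * D * star U) = _
    simp only [mul_assoc]
    rw [← mul_assoc (star U) U, hU, one_mul]
  rw [h1, Matrix.trace_mul_cycle, ← mul_assoc, hU, one_mul]
  show Matrix.trace (D * D) = _
  rw [show D * D = Matrix.diagonal (fun i => ((hherm.eigenvalues i : ℂ))^2) by
    rw [Matrix.diagonal_mul_diagonal]; congr with i; simp [Function.comp]; ring,
    Matrix.trace_diagonal]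

end matrixfacts

end HolevoAux
open HolevoAux


theorem holevo_chi_pure_binary_le
    {d : ℕ} (φ0 φ1 : EuclideanSpace ℂ (Fin d)) (h0 : ‖φ0‖ = 1) (h1 : ‖φ1‖ = 1)
    (p : ℝ) (hp : p ∈ Set.Icc (0:ℝ) 1)
    (ρ : Matrix (Fin d) (Fin d) ℂ)
    (hρ : ρ = (p : ℂ) • Matrix.of (fun i j => φ0 i * (starRingEnd ℂ) (φ0 j)) +
              ((1 - p : ℝ) : ℂ) • Matrix.of (fun i j => φ1 i * (starRingEnd ℂ) (φ1 j)))
    (hherm : ρ.IsHermitian) :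
    (∑ i, -(hherm.eigenvalues i * Real.logb 2 (hherm.eigenvalues i))) ≤
      2 * Real.sqrt (p * (1-p) * (1 - ‖⟪φ0, φ1⟫_ℂ‖ ^ 2)) := by
  classical
  obtain ⟨hp0, hp1⟩ := hp
  -- A and PSD and rank
  set A : Matrix (Fin d) (Fin 2) ℂ := Matrix.of
    (fun i k => if k = 0 then ((Real.sqrt p : ℝ) : ℂ) * φ0 i
      else ((Real.sqrt (1-p) : ℝ) : ℂ) * φ1 i) with hAdef
  have hρA : ρ = A * A.conjTranspose := by
    rw [hρ]
    ext i j
    simp only [Matrix.mul_apply, Matrix.conjTranspose_apply, Fin.sum_univ_two, hAdef,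
      Matrix.of_apply, Matrix.add_apply, Matrix.smul_apply, smul_eq_mul]
    norm_num
    have e0 : ((Real.sqrt p : ℝ) : ℂ) * ((Real.sqrt p : ℝ) : ℂ) = (p : ℂ) := by
      rw [← Complex.ofReal_mul, Real.mul_self_sqrt hp0]
    have e1 : ((Real.sqrt (1-p) : ℝ) : ℂ) * ((Real.sqrt (1-p) : ℝ) : ℂ) = 1 - (p : ℂ) := by
      rw [← Complex.ofReal_mul, Real.mul_self_sqrt (by linarith)]
      push_cast
      ring
    rw [← e1, ← e0]
    ring
  have hpsd : ρ.PosSemidef := by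
    rw [hρA]; exact Matrix.posSemidef_self_mul_conjTranspose A
  have hrank : ρ.rank ≤ 2 := by
    rw [hρA]
    exact le_trans (Matrix.rank_mul_le_left A A.conjTranspose)
      (le_trans (Matrix.rank_le_card_width A) (by simp))
  have hnonneg : ∀ i, 0 ≤ hherm.eigenvalues i := fun i => hpsd.eigenvalues_nonneg i
  have hcard : (Finset.univ.filter (fun i => hherm.eigenvalues i ≠ 0)).card ≤ 2 := by
    classical
    have := hherm.rank_eq_card_non_zero_eigs
    rw [Fintype.card_subtype] at this
    omega
  -- inner products
  have hinner0 : ⟪φ0, φ0⟫_ℂ = 1 := by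
    rw [inner_self_eq_norm_sq_to_K, h0]; norm_num
  have hinner1 : ⟪φ1, φ1⟫_ℂ = 1 := by
    rw [inner_self_eq_norm_sq_to_K, h1]; norm_num
  -- trace = 1
  have htr : Matrix.trace ρ = 1 := by
    rw [hρ, Matrix.trace_add, Matrix.trace_smul, Matrix.trace_smul, trace_outer, trace_outer,
      hinner0, hinner1]
    simp
  have hsum1 : ∑ i, hherm.eigenvalues i = 1 := by
    have h2 := trace_eq_sum_eigs hherm
    rw [htr] at h2
    have : ((∑ i, hherm.eigenvalues i : ℝ) : ℂ) = ((1:ℝ) : ℂ) := by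
      push_cast
      rw [← h2]
    exact_mod_cast this
  -- trace of square
  have htr2 : Matrix.trace (ρ * ρ) =
      ((p^2 + (1-p)^2 + 2*p*(1-p)*(‖⟪φ0, φ1⟫_ℂ‖)^2 : ℝ) : ℂ) := by
    rw [hρ]
    rw [add_mul, mul_add, mul_add, Matrix.smul_mul, Matrix.smul_mul, Matrix.smul_mul,
      Matrix.smul_mul, Matrix.mul_smul, Matrix.mul_smul, Matrix.mul_smul, Matrix.mul_smul]
    rw [Matrix.trace_add, Matrix.trace_add, Matrix.trace_add]
    simp only [Matrix.trace_smul, trace_outer_mul_outer, hinner0, hinner1, smul_eq_mul]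
    have hba : ⟪φ1, φ0⟫_ℂ = (starRingEnd ℂ) ⟪φ0, φ1⟫_ℂ := (inner_conj_symm φ1 φ0).symm
    rw [hba, Complex.mul_conj, mul_comm ((starRingEnd ℂ) ⟪φ0, φ1⟫_ℂ) ⟪φ0, φ1⟫_ℂ,
      Complex.mul_conj, Complex.normSq_eq_norm_sq]
    push_cast
    ring
  have hsum2 : ∑ i, (hherm.eigenvalues i)^2
      = p^2 + (1-p)^2 + 2*p*(1-p)*(‖⟪φ0, φ1⟫_ℂ‖)^2 := by
    have h2 := trace_sq_eq_sum_sq_eigs hherm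
    rw [htr2] at h2
    have : ((∑ i, (hherm.eigenvalues i)^2 : ℝ) : ℂ)
        = ((p^2 + (1-p)^2 + 2*p*(1-p)*(‖⟪φ0, φ1⟫_ℂ‖)^2 : ℝ) : ℂ) := by
      push_cast
      rw [← h2]
      push_cast
      rfl
    exact_mod_cast this
  -- abbreviations
  set ev := hherm.eigenvalues with hev
  set B2 := ‖⟪φ0, φ1⟫_ℂ‖ ^ 2 with hB2
  set T := Finset.univ.filter (fun i => ev i ≠ 0) with hT
  have hTsum : ∀ (f : Fin d → ℝ), (∀ i, ev i = 0 → f i = 0) →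
      ∑ i ∈ T, f i = ∑ i, f i := by
    intro f hf
    apply Finset.sum_filter_of_ne
    intro i _ hfi
    intro hevi
    exact hfi (hf i hevi)
  have hsum1T : ∑ i ∈ T, ev i = 1 := by
    rw [hTsum ev (fun i h => h)]
    exact hsum1
  have hentT : ∑ i ∈ T, -(ev i * Real.logb 2 (ev i)) =
      ∑ i, -(ev i * Real.logb 2 (ev i)) := by
    apply hTsum
    intro i h
    rw [h]
    simp
  have hsum2T : ∑ i ∈ T, (ev i)^2 = p^2 + (1-p)^2 + 2*p*(1-p)*B2 := by
    rw [hTsum (fun i => (ev i)^2) (fun i h => by simp [h])]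
    exact hsum2
  have hRHSnn : 0 ≤ 2 * Real.sqrt (p * (1-p) * (1 - B2)) := by positivity
  rw [← hentT]
  have hlog2 : (0:ℝ) < Real.log 2 := Real.log_pos one_lt_two
  have hTne : T.Nonempty := by
    by_contra hc
    rw [Finset.not_nonempty_iff_eq_empty] at hc
    rw [hc, Finset.sum_empty] at hsum1T
    norm_num at hsum1T
  have hcase : T.card = 1 ∨ T.card = 2 := by
    have := Finset.card_pos.2 hTne
    omega
  rcases hcase with h1 | h2
  · -- one nonzero eigenvalue
    obtain ⟨i, hi⟩ := Finset.card_eq_one.mp h1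
    rw [hi, Finset.sum_singleton] at hsum1T ⊢
    rw [hsum1T]
    simpa using hRHSnn
  · -- two nonzero eigenvalues
    obtain ⟨i, j, hij, hTij⟩ := Finset.card_eq_two.mp h2
    rw [hTij, Finset.sum_pair hij] at hsum1T hsum2T ⊢
    have hprod : ev i * ev j = p*(1-p)*(1-B2) := by nlinarith [hsum1T, hsum2T]
    have hj' : (1:ℝ) - ev i = ev j := by linarith
    have hiIcc : ev i ∈ Set.Icc (0:ℝ) 1 := ⟨hnonneg i, by linarith [hnonneg j]⟩
    have hkey := binEntropy_le_two_log_sqrt (ev i) hiIcc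
    have harg : ev i * (1 - ev i) = p*(1-p)*(1-B2) := by rw [hj', hprod]
    rw [harg] at hkey
    have hbe : Real.binEntropy (ev i) = -(ev i * Real.log (ev i)) + -(ev j * Real.log (ev j)) := by
      rw [Real.binEntropy_eq_negMulLog_add_negMulLog_one_sub, hj']
      simp only [Real.negMulLog, neg_mul]
    calc -(ev i * Real.logb 2 (ev i)) + -(ev j * Real.logb 2 (ev j))
        = Real.binEntropy (ev i) / Real.log 2 := by
          simp only [Real.logb]
          rw [hbe]
          ring
      _ ≤ (2 * Real.log 2 * Real.sqrt (p*(1-p)*(1-B2))) / Real.log 2 :=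
          (div_le_div_iff_of_pos_right hlog2).mpr hkey
      _ = 2 * Real.sqrt (p*(1-p)*(1-B2)) := by field_simp
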